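/- Let K be a field with char K ≠ 2 and let 𝔤 be a Lie algebra over K. Let ρ: χ(𝔤) → 𝔤 ⊕ 𝔤 ⊕ 𝔤 be the homomorphism with ρ(x) = (x, x, 0) and ρ(x^ψ) = (0, x, x) for x ∈ 𝔤, and set W(𝔤) = ker ρ. Then W(𝔤) = L(𝔤) ∩ D(𝔤), W(𝔤) is central in L(𝔤) + D(𝔤) (i.e. [W(𝔤), L(𝔤) + D(𝔤)] = 0), and in particular W(𝔤) is an abelian ideal of χ(𝔤). -/

import Mathlib

/- Formalization of a statement from "Weak commutativity for Lie algebras"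
   (arXiv:1808.10303). All Lie algebras are over a fixed field `K` with `char K ≠ 2`. -/

universe u v w

set_option linter.unusedVariables false

section ProdLie

variable (L : Type*) (M : Type*) [LieRing L] [LieRing M]

/-- The direct sum of two Lie rings, with componentwise bracket. -/
instance prodLieRing : LieRing (L × M) where
  bracket p q := (⁅p.1, q.1⁆, ⁅p.2, q.2⁆)
  add_lie p q r := by refine Prod.ext ?_ ?_ <;> dsimp <;> exact add_lie _ _ _
  lie_add p q r := by refine Prod.ext ?_ ?_ <;> dsimp <;> exact lie_add _ _ _
  lie_self p := by refine Prod.ext ?_ ?_ <;> dsimp <;> simp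
  leibniz_lie p q r := by refine Prod.ext ?_ ?_ <;> dsimp <;> exact leibniz_lie _ _ _

/-- The direct sum of two Lie algebras. -/
instance prodLieAlgebra (K : Type*) [CommRing K] [LieAlgebra K L] [LieAlgebra K M] :
    LieAlgebra K (L × M) where
  lie_smul t p q := by refine Prod.ext ?_ ?_ <;> exact lie_smul _ _ _

end ProdLie

section WeakCommutativity

variable (K : Type u) [Field K] (g : Type v) [LieRing g] [LieAlgebra K g]

/-- The image of `x ∈ g` (first copy) in the free Lie algebra on two copies of `g`. -/
noncomputable def ofl (x : g) : FreeLieAlgebra K (g ⊕ g) := FreeLieAlgebra.of K (Sum.inl x)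

/-- The image of `xᵠ ∈ gᵠ` (second copy) in the free Lie algebra on two copies of `g`. -/
noncomputable def ofr (x : g) : FreeLieAlgebra K (g ⊕ g) := FreeLieAlgebra.of K (Sum.inr x)

/-- Relators presenting `χ(g)` as a quotient of the free Lie algebra on the disjoint union of
two copies of (the underlying type of) `g`: the relations presenting the free Lie product
(coproduct) of `g` and its copy `gᵠ`, together with the weak commutativity relations
`⁅x, xᵠ⁆ = 0` for all `x ∈ g`. -/
def chiRelators : Set (FreeLieAlgebra K (g ⊕ g)) :=
  { z | (∃ x y : g, z = ofl K g (x + y) - ofl K g x - ofl K g y)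
      ∨ (∃ (c : K) (x : g), z = ofl K g (c • x) - c • ofl K g x)
      ∨ (∃ x y : g, z = ofl K g ⁅x, y⁆ - ⁅ofl K g x, ofl K g y⁆)
      ∨ (∃ x y : g, z = ofr K g (x + y) - ofr K g x - ofr K g y)
      ∨ (∃ (c : K) (x : g), z = ofr K g (c • x) - c • ofr K g x)
      ∨ (∃ x y : g, z = ofr K g ⁅x, y⁆ - ⁅ofr K g x, ofr K g y⁆)
      ∨ (∃ x : g, z = ⁅ofl K g x, ofr K g x⁆) }

/-- The ideal of relations defining `χ(g)`. -/
noncomputable def chiIdeal : LieIdeal K (FreeLieAlgebra K (g ⊕ g)) :=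
  LieSubmodule.lieSpan K (FreeLieAlgebra K (g ⊕ g)) (chiRelators K g)

/-- Sidki's weak commutativity Lie algebra `χ(g)`: the quotient of the free Lie product of
two isomorphic copies `g`, `gᵠ` of `g` by the ideal generated by the brackets `⁅x, xᵠ⁆`. -/
abbrev chi : Type (max u v) := FreeLieAlgebra K (g ⊕ g) ⧸ chiIdeal K g

/-- The canonical image of `x ∈ g` (first copy) in `χ(g)`. -/
noncomputable def chiι (x : g) : chi K g :=
  LieSubmodule.Quotient.mk (N := chiIdeal K g) (ofl K g x)

/-- The canonical image of `xᵠ` (the second copy of `x ∈ g`) in `χ(g)`. -/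
noncomputable def chiψ (x : g) : chi K g :=
  LieSubmodule.Quotient.mk (N := chiIdeal K g) (ofr K g x)

/-- The ideal `L(g) ⊆ χ(g)`, generated by the elements `x - xᵠ` for `x ∈ g`. -/
noncomputable def chiL : LieIdeal K (chi K g) :=
  LieSubmodule.lieSpan K (chi K g) (Set.range fun x : g => chiι K g x - chiψ K g x)

/-- The ideal `D(g) ⊆ χ(g)`, generated by the brackets `⁅x, yᵠ⁆` for `x, y ∈ g`. -/
noncomputable def chiD : LieIdeal K (chi K g) :=
  LieSubmodule.lieSpan K (chi K g) { z | ∃ x y : g, z = ⁅chiι K g x, chiψ K g y⁆ }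

end WeakCommutativity


section Aux

variable (K : Type u) [Field K] (g : Type v) [LieRing g] [LieAlgebra K g]

/-- The quotient map `FreeLie → χ(g)` as a morphism of Lie algebras. -/
noncomputable def chiMk : FreeLieAlgebra K (g ⊕ g) →ₗ⁅K⁆ chi K g :=
  { (chiIdeal K g).toSubmodule.mkQ with
    map_lie' := rfl }

theorem chiMk_surj : Function.Surjective (chiMk K g) :=
  Submodule.Quotient.mk_surjective _

theorem chi_rel {z : FreeLieAlgebra K (g ⊕ g)} (h : z ∈ chiRelators K g) :
    chiMk K g z = 0 :=
  (LieSubmodule.Quotient.mk_eq_zero').mpr (LieSubmodule.subset_lieSpan h)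

theorem chiι_add (x y : g) : chiι K g (x + y) = chiι K g x + chiι K g y := by
  have h := chi_rel K g (Or.inl ⟨x, y, rfl⟩)
  rw [map_sub, map_sub, sub_sub, sub_eq_zero] at h
  exact h

theorem chiι_smul (c : K) (x : g) : chiι K g (c • x) = c • chiι K g x := by
  have h := chi_rel K g (Or.inr (Or.inl ⟨c, x, rfl⟩))
  rw [map_sub, map_smul, sub_eq_zero] at h
  exact h

theorem chiι_lie (x y : g) : chiι K g ⁅x, y⁆ = ⁅chiι K g x, chiι K g y⁆ := by
  have h := chi_rel K g (Or.inr (Or.inr (Or.inl ⟨x, y, rfl⟩)))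
  rw [map_sub, sub_eq_zero, LieHom.map_lie] at h
  exact h

theorem chiψ_add (x y : g) : chiψ K g (x + y) = chiψ K g x + chiψ K g y := by
  have h := chi_rel K g (Or.inr (Or.inr (Or.inr (Or.inl ⟨x, y, rfl⟩))))
  rw [map_sub, map_sub, sub_sub, sub_eq_zero] at h
  exact h

theorem chiψ_smul (c : K) (x : g) : chiψ K g (c • x) = c • chiψ K g x := by
  have h := chi_rel K g (Or.inr (Or.inr (Or.inr (Or.inr (Or.inl ⟨c, x, rfl⟩)))))
  rw [map_sub, map_smul, sub_eq_zero] at h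
  exact h

theorem chiψ_lie (x y : g) : chiψ K g ⁅x, y⁆ = ⁅chiψ K g x, chiψ K g y⁆ := by
  have h := chi_rel K g (Or.inr (Or.inr (Or.inr (Or.inr (Or.inr (Or.inl ⟨x, y, rfl⟩))))))
  rw [map_sub, sub_eq_zero, LieHom.map_lie] at h
  exact h

theorem chi_self (x : g) : ⁅chiι K g x, chiψ K g x⁆ = 0 := by
  have h := chi_rel K g
    (Or.inr (Or.inr (Or.inr (Or.inr (Or.inr (Or.inr ⟨x, rfl⟩))))))
  rw [LieHom.map_lie] at h
  exact h

theorem chiι_zero : chiι K g 0 = 0 := by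
  have h := chiι_smul K g 0 0
  rwa [zero_smul, zero_smul] at h

theorem chiψ_zero : chiψ K g 0 = 0 := by
  have h := chiψ_smul K g 0 0
  rwa [zero_smul, zero_smul] at h

theorem chiι_neg (x : g) : chiι K g (-x) = -chiι K g x := by
  have h := chiι_smul K g (-1) x
  rwa [neg_one_smul, neg_one_smul] at h

theorem chiψ_neg (x : g) : chiψ K g (-x) = -chiψ K g x := by
  have h := chiψ_smul K g (-1) x
  rwa [neg_one_smul, neg_one_smul] at h

theorem chiι_sub (x y : g) : chiι K g (x - y) = chiι K g x - chiι K g y := by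
  rw [sub_eq_add_neg, chiι_add, chiι_neg, sub_eq_add_neg]

theorem chiψ_sub (x y : g) : chiψ K g (x - y) = chiψ K g x - chiψ K g y := by
  rw [sub_eq_add_neg, chiψ_add, chiψ_neg, sub_eq_add_neg]

theorem chi_swap (x y : g) : ⁅chiι K g x, chiψ K g y⁆ = -⁅chiι K g y, chiψ K g x⁆ := by
  have h := chi_self K g (x + y)
  rw [chiι_add, chiψ_add, add_lie, lie_add, lie_add, chi_self, chi_self,
    zero_add, add_zero] at h
  exact eq_neg_of_add_eq_zero_left h

/-- Induction principle for `χ(g)`. -/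
theorem chi_induction {P : chi K g → Prop}
    (hι : ∀ x, P (chiι K g x)) (hψ : ∀ x, P (chiψ K g x)) (h0 : P 0)
    (hadd : ∀ a b, P a → P b → P (a + b))
    (hsmul : ∀ (c : K) a, P a → P (c • a))
    (hlie : ∀ a b, P a → P b → P ⁅a, b⁆) (z : chi K g) : P z := by
  let S : LieSubalgebra K (chi K g) :=
    { carrier := {w | P w}
      add_mem' := fun ha hb => hadd _ _ ha hb
      zero_mem' := h0
      smul_mem' := fun c a ha => hsmul c a ha
      lie_mem' := fun ha hb => hlie _ _ ha hb }
  let f : FreeLieAlgebra K (g ⊕ g) →ₗ⁅K⁆ S :=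
    FreeLieAlgebra.lift K fun a =>
      ⟨chiMk K g (FreeLieAlgebra.of K a), by
        rcases a with x | x
        · exact hι x
        · exact hψ x⟩
  have hcomp : S.incl.comp f = chiMk K g := by
    apply FreeLieAlgebra.hom_ext
    intro a
    simp only [LieHom.comp_apply, f, FreeLieAlgebra.lift_of_apply]
    rfl
  obtain ⟨w, rfl⟩ := chiMk_surj K g z
  have hc := LieHom.congr_fun hcomp w
  exact hc ▸ (f w).2

end Aux

section Abstract

/- Abstract consequences of the weak-commutativity relations, for maps
`i p : g → A` to an arbitrary Lie `K`-algebra `A`. -/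

variable {K : Type u} [Field K] {g : Type v} [LieRing g] [LieAlgebra K g]
variable {A : Type w} [LieRing A] [LieAlgebra K A]

/-- `ℓ(a) = i(a) - p(a)`. -/
def ll (i p : g → A) (a : g) : A := i a - p a

theorem skw {B : Type*} [LieRing B] (a b : B) : ⁅a, b⁆ = -⁅b, a⁆ :=
  (lie_skew a b).symm

theorem jac3 {B : Type*} [LieRing B] (a b c : B) :
    ⁅a, ⁅b, c⁆⁆ = ⁅b, ⁅a, c⁆⁆ - ⁅c, ⁅a, b⁆⁆ := by
  have h : -⁅⁅a, b⁆, c⁆ = ⁅c, ⁅a, b⁆⁆ := lie_skew c ⁅a, b⁆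
  rw [leibniz_lie, ← h]
  abel

variable (i p : g → A)
variable (hilie : ∀ a b, i ⁅a, b⁆ = ⁅i a, i b⁆)
variable (hplie : ∀ a b, p ⁅a, b⁆ = ⁅p a, p b⁆)
variable (hisub : ∀ a b, i (a - b) = i a - i b)
variable (hpsub : ∀ a b, p (a - b) = p a - p b)
variable (hswap : ∀ a b, ⁅i a, p b⁆ = -⁅i b, p a⁆)

section Swap

include hswap

theorem hswap' (a b : g) : ⁅p a, i b⁆ = ⁅i a, p b⁆ := by
  rw [hswap a b]
  exact (lie_skew _ _).symm

include hilie hplie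

theorem key_n (x w : g) : ⁅ll i p x, i w + p w⁆ = ll i p ⁅x, w⁆ := by
  have h1 := hswap' i p hswap x w
  simp only [ll, sub_lie, lie_add, hilie, hplie, h1]
  abel

theorem key_i (x w : g) :
    (2 : K) • ⁅ll i p x, i w⁆ = ⁅ll i p x, ll i p w⁆ + ll i p ⁅x, w⁆ := by
  have hs : i w + i w = ll i p w + (i w + p w) := by simp only [ll]; abel
  rw [two_smul, ← lie_add, hs, lie_add, key_n i p hilie hplie hswap]

theorem key_p (x w : g) :
    (2 : K) • ⁅ll i p x, p w⁆ = ll i p ⁅x, w⁆ - ⁅ll i p x, ll i p w⁆ := by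
  have hs : p w + p w = (i w + p w) - ll i p w := by simp only [ll]; abel
  rw [two_smul, ← lie_add, hs, lie_sub, key_n i p hilie hplie hswap]

theorem key_b (u v : g) :
    (2 : K) • ⁅i u, p v⁆ = (i ⁅u, v⁆ + p ⁅u, v⁆) - ⁅ll i p u, ll i p v⁆ := by
  have h1 := hswap' i p hswap u v
  rw [two_smul]
  simp only [ll, sub_lie, lie_sub, hilie, hplie, h1]
  abel

theorem key_E1 (a b c : g) :
    (2 : K) • ⁅ll i p a, ⁅i b, p c⁆⁆ =
      ll i p ⁅a, ⁅b, c⁆⁆ - ⁅ll i p a, ⁅ll i p b, ll i p c⁆⁆ := by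
  rw [← lie_smul, key_b i p hilie hplie hswap, lie_sub, key_n i p hilie hplie hswap]

end Swap

section WithChar

variable (hchar : ringChar K ≠ 2)

include hchar

theorem halve {w : A} (h : (2 : K) • w = 0) : w = 0 := by
  have h2 : (2 : K) ≠ 0 := Ring.two_ne_zero hchar
  have h' := congrArg (fun z : A => (2 : K)⁻¹ • z) h
  simpa [smul_smul, inv_mul_cancel₀ h2] using h'

include hilie hplie hisub hpsub hswap

theorem key_base (x u v : g) : ⁅ll i p x, ⁅i u, p v⁆⁆ = 0 := by
  have hizero : i 0 = 0 := by
    have h := hisub 0 0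
    rw [sub_self, sub_self] at h
    exact h
  have hpzero : p 0 = 0 := by
    have h := hpsub 0 0
    rw [sub_self, sub_self] at h
    exact h
  have hineg : ∀ a, i (-a) = -i a := fun a => by
    have h := hisub 0 a
    rwa [zero_sub, hizero, zero_sub] at h
  have hpneg : ∀ a, p (-a) = -p a := fun a => by
    have h := hpsub 0 a
    rwa [zero_sub, hpzero, zero_sub] at h
  have ll_neg : ∀ a, ll i p (-a) = -(ll i p a) := fun a => by
    simp only [ll, hineg, hpneg]; abel
  have ll_sub : ∀ a b, ll i p (a - b) = ll i p a - ll i p b := fun a b => by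
    simp only [ll, hisub, hpsub]; abel
  -- Leibniz split of β = ⁅ℓx, ⁅i u, p v⁆⁆
  have hBsplit : ⁅ll i p x, ⁅i u, p v⁆⁆ =
      ⁅⁅ll i p x, i u⁆, p v⁆ + ⁅i u, ⁅ll i p x, p v⁆⁆ := leibniz_lie _ _ _
  have h2β : (2 : K) • ⁅ll i p x, ⁅i u, p v⁆⁆ =
      ⁅⁅ll i p x, ll i p u⁆, p v⁆ + ⁅ll i p ⁅x, u⁆, p v⁆ +
        (⁅i u, ll i p ⁅x, v⁆⁆ - ⁅i u, ⁅ll i p x, ll i p v⁆⁆) := by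
    rw [hBsplit, smul_add, ← smul_lie, key_i i p hilie hplie hswap,
      ← lie_smul, key_p i p hilie hplie hswap, add_lie, lie_sub]
  have hA : (2 : K) • ⁅⁅ll i p x, ll i p u⁆, p v⁆ =
      (⁅ll i p x, ll i p ⁅u, v⁆⁆ - ⁅ll i p x, ⁅ll i p u, ll i p v⁆⁆) -
        (⁅ll i p u, ll i p ⁅x, v⁆⁆ - ⁅ll i p u, ⁅ll i p x, ll i p v⁆⁆) := by
    have hj : ⁅⁅ll i p x, ll i p u⁆, p v⁆ =
        ⁅ll i p x, ⁅ll i p u, p v⁆⁆ - ⁅ll i p u, ⁅ll i p x, p v⁆⁆ := by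
      rw [leibniz_lie]; abel
    rw [hj, smul_sub, ← lie_smul, key_p i p hilie hplie hswap,
      ← lie_smul, key_p i p hilie hplie hswap, lie_sub, lie_sub]
  have hB : (2 : K) • ⁅ll i p ⁅x, u⁆, p v⁆ =
      ll i p ⁅⁅x, u⁆, v⁆ - ⁅ll i p ⁅x, u⁆, ll i p v⁆ :=
    key_p i p hilie hplie hswap ⁅x, u⁆ v
  have hC : (2 : K) • ⁅i u, ll i p ⁅x, v⁆⁆ =
      -(⁅ll i p ⁅x, v⁆, ll i p u⁆ + ll i p ⁅⁅x, v⁆, u⁆) := by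
    have hsk : ⁅i u, ll i p ⁅x, v⁆⁆ = -⁅ll i p ⁅x, v⁆, i u⁆ := skw _ _
    rw [hsk, smul_neg, key_i i p hilie hplie hswap]
  have hD : (2 : K) • ⁅i u, ⁅ll i p x, ll i p v⁆⁆ =
      -((⁅ll i p x, ⁅ll i p v, ll i p u⁆⁆ + ⁅ll i p x, ll i p ⁅v, u⁆⁆) -
        (⁅ll i p v, ⁅ll i p x, ll i p u⁆⁆ + ⁅ll i p v, ll i p ⁅x, u⁆⁆)) := by
    have hsk : ⁅i u, ⁅ll i p x, ll i p v⁆⁆ = -⁅⁅ll i p x, ll i p v⁆, i u⁆ := skw _ _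
    have hj : ⁅⁅ll i p x, ll i p v⁆, i u⁆ =
        ⁅ll i p x, ⁅ll i p v, i u⁆⁆ - ⁅ll i p v, ⁅ll i p x, i u⁆⁆ := by
      rw [leibniz_lie]; abel
    rw [hsk, hj, smul_neg, smul_sub, ← lie_smul, key_i i p hilie hplie hswap,
      ← lie_smul, key_i i p hilie hplie hswap, lie_add, lie_add]
  -- assemble: 2•(2•β) = ll⁅x,⁅u,v⁆⁆ - ⁅ℓx,⁅ℓu,ℓv⁆⁆
  have hg : ll i p ⁅x, ⁅u, v⁆⁆ = ll i p ⁅⁅x, u⁆, v⁆ - ll i p ⁅⁅x, v⁆, u⁆ := by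
    have h1 : ⁅u, ⁅x, v⁆⁆ = -⁅⁅x, v⁆, u⁆ := skw _ _
    have h2 : ⁅x, ⁅u, v⁆⁆ = ⁅⁅x, u⁆, v⁆ - ⁅⁅x, v⁆, u⁆ := by
      rw [leibniz_lie, h1]; abel
    rw [h2, ll_sub]
  have hfour : (2 : K) • ((2 : K) • ⁅ll i p x, ⁅i u, p v⁆⁆) =
      ll i p ⁅x, ⁅u, v⁆⁆ - ⁅ll i p x, ⁅ll i p u, ll i p v⁆⁆ := by
    rw [h2β, smul_add, smul_add, smul_sub, hA, hB, hC, hD]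
    -- normalize atoms
    have r1 : ⁅ll i p v, ll i p u⁆ = -⁅ll i p u, ll i p v⁆ := skw _ _
    have r2 : ll i p ⁅v, u⁆ = -(ll i p ⁅u, v⁆) := by
      rw [skw v u, ll_neg]
    have r3 : ⁅ll i p ⁅x, v⁆, ll i p u⁆ = -⁅ll i p u, ll i p ⁅x, v⁆⁆ := skw _ _
    have r4 : ⁅ll i p ⁅x, u⁆, ll i p v⁆ = -⁅ll i p v, ll i p ⁅x, u⁆⁆ := skw _ _
    have r5 : ⁅ll i p u, ⁅ll i p x, ll i p v⁆⁆ =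
        ⁅ll i p x, ⁅ll i p u, ll i p v⁆⁆ + ⁅ll i p v, ⁅ll i p x, ll i p u⁆⁆ := by
      rw [jac3 (ll i p x) (ll i p u) (ll i p v)]; abel
    rw [r1, r2, r3, r4, r5, hg, lie_neg, lie_neg]
    abel
  have h2E := key_E1 (K := K) i p hilie hplie hswap x u v
  have hww : (2 : K) • ((2 : K) • ⁅ll i p x, ⁅i u, p v⁆⁆) =
      (2 : K) • ⁅ll i p x, ⁅i u, p v⁆⁆ := by rw [hfour, h2E]
  rw [two_smul] at hww
  have h0 : (2 : K) • ⁅ll i p x, ⁅i u, p v⁆⁆ = 0 := by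
    exact add_eq_left.mp hww
  exact halve hchar h0

theorem key_step_i (d : A) (hd : ∀ y, ⁅ll i p y, d⁆ = 0) (x w : g) :
    ⁅ll i p x, ⁅i w, d⁆⁆ = 0 := by
  apply halve hchar (w := ⁅ll i p x, ⁅i w, d⁆⁆)
  have hsplit : ⁅ll i p x, ⁅i w, d⁆⁆ =
      ⁅⁅ll i p x, i w⁆, d⁆ + ⁅i w, ⁅ll i p x, d⁆⁆ := leibniz_lie _ _ _
  have hj : ⁅⁅ll i p x, ll i p w⁆, d⁆ =
      ⁅ll i p x, ⁅ll i p w, d⁆⁆ - ⁅ll i p w, ⁅ll i p x, d⁆⁆ := by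
    rw [leibniz_lie]; abel
  rw [hsplit, hd x, lie_zero, add_zero, ← smul_lie, key_i i p hilie hplie hswap,
    add_lie, hd ⁅x, w⁆, add_zero, hj, hd w, hd x, lie_zero, lie_zero, sub_zero]

theorem key_step_p (d : A) (hd : ∀ y, ⁅ll i p y, d⁆ = 0) (x w : g) :
    ⁅ll i p x, ⁅p w, d⁆⁆ = 0 := by
  apply halve hchar (w := ⁅ll i p x, ⁅p w, d⁆⁆)
  have hsplit : ⁅ll i p x, ⁅p w, d⁆⁆ =
      ⁅⁅ll i p x, p w⁆, d⁆ + ⁅p w, ⁅ll i p x, d⁆⁆ := leibniz_lie _ _ _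
  have hj : ⁅⁅ll i p x, ll i p w⁆, d⁆ =
      ⁅ll i p x, ⁅ll i p w, d⁆⁆ - ⁅ll i p w, ⁅ll i p x, d⁆⁆ := by
    rw [leibniz_lie]; abel
  rw [hsplit, hd x, lie_zero, add_zero, ← smul_lie, key_p i p hilie hplie hswap,
    sub_lie, hd ⁅x, w⁆, hj, hd w, hd x, lie_zero, lie_zero, sub_zero, zero_sub,
    neg_zero]

end WithChar

end Abstract

section Main

variable (K : Type u) [Field K] (g : Type v) [LieRing g] [LieAlgebra K g]

theorem chi_hyps :
    (∀ a b : g, chiι K g ⁅a, b⁆ = ⁅chiι K g a, chiι K g b⁆) ∧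
    (∀ a b : g, chiψ K g ⁅a, b⁆ = ⁅chiψ K g a, chiψ K g b⁆) ∧
    (∀ a b : g, chiι K g (a - b) = chiι K g a - chiι K g b) ∧
    (∀ a b : g, chiψ K g (a - b) = chiψ K g a - chiψ K g b) ∧
    (∀ a b : g, ⁅chiι K g a, chiψ K g b⁆ = -⁅chiι K g b, chiψ K g a⁆) :=
  ⟨chiι_lie K g, chiψ_lie K g, chiι_sub K g, chiψ_sub K g, chi_swap K g⟩

variable {K g}

theorem chi_ad_closed (hchar : ringChar K ≠ 2) (z d : chi K g)
    (hd : ∀ x : g, ⁅chiι K g x - chiψ K g x, d⁆ = 0) :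
    ∀ x : g, ⁅chiι K g x - chiψ K g x, ⁅z, d⁆⁆ = 0 := by
  obtain ⟨hil, hpl, his, hps, hsw⟩ := chi_hyps K g
  revert d
  refine chi_induction K g
    (P := fun z => ∀ d, (∀ x : g, ⁅chiι K g x - chiψ K g x, d⁆ = 0) →
      ∀ x : g, ⁅chiι K g x - chiψ K g x, ⁅z, d⁆⁆ = 0) ?_ ?_ ?_ ?_ ?_ ?_ z
  · intro w d hd x
    exact key_step_i (chiι K g) (chiψ K g) hil hpl his hps hsw hchar d hd x w
  · intro w d hd x
    exact key_step_p (chiι K g) (chiψ K g) hil hpl his hps hsw hchar d hd x w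
  · intro d hd x
    rw [zero_lie, lie_zero]
  · intro a b ha hb d hd x
    rw [add_lie, lie_add, ha d hd x, hb d hd x, add_zero]
  · intro c a ha d hd x
    rw [smul_lie, lie_smul, ha d hd x, smul_zero]
  · intro a b ha hb d hd x
    have hj : ⁅⁅a, b⁆, d⁆ = ⁅a, ⁅b, d⁆⁆ - ⁅b, ⁅a, d⁆⁆ := by
      rw [leibniz_lie]; abel
    rw [hj, lie_sub, ha ⁅b, d⁆ (hb d hd) x, hb ⁅a, d⁆ (ha d hd) x, sub_zero]

theorem chiD_cent (hchar : ringChar K ≠ 2) :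
    ∀ d ∈ chiD K g, ∀ x : g, ⁅chiι K g x - chiψ K g x, d⁆ = 0 := by
  obtain ⟨hil, hpl, his, hps, hsw⟩ := chi_hyps K g
  let N : LieSubmodule K (chi K g) (chi K g) :=
    { carrier := {d | ∀ x : g, ⁅chiι K g x - chiψ K g x, d⁆ = 0}
      add_mem' := fun ha hb x => by
        rw [lie_add, ha x, hb x, add_zero]
      zero_mem' := fun x => lie_zero _
      smul_mem' := fun c a ha x => by
        rw [lie_smul, ha x, smul_zero]
      lie_mem := fun {z d} hd => chi_ad_closed hchar z d hd }
  have hle : chiD K g ≤ N := by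
    rw [chiD, LieSubmodule.lieSpan_le]
    rintro w ⟨a, b, rfl⟩
    exact fun x => key_base (chiι K g) (chiψ K g) hil hpl his hps hsw hchar x a b
  exact fun d hd => hle hd

theorem chiLD (hchar : ringChar K ≠ 2) :
    ∀ a ∈ chiL K g, ∀ d ∈ chiD K g, ⁅a, d⁆ = 0 := by
  let C : LieSubmodule K (chi K g) (chi K g) :=
    { carrier := {z | ∀ d ∈ chiD K g, ⁅z, d⁆ = 0}
      add_mem' := fun ha hb d hd => by
        rw [add_lie, ha d hd, hb d hd, add_zero]
      zero_mem' := fun d hd => zero_lie _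
      smul_mem' := fun c a ha d hd => by
        rw [smul_lie, ha d hd, smul_zero]
      lie_mem := fun {w z} hz d hd => by
        have hj : ⁅⁅w, z⁆, d⁆ = ⁅w, ⁅z, d⁆⁆ - ⁅z, ⁅w, d⁆⁆ := by
          rw [leibniz_lie]; abel
        rw [hj, hz d hd, lie_zero, hz ⁅w, d⁆ ((chiD K g).lie_mem hd), sub_zero] }
  have hle : chiL K g ≤ C := by
    rw [chiL, LieSubmodule.lieSpan_le]
    rintro w ⟨x, rfl⟩
    exact fun d hd => chiD_cent hchar d hd x
  exact fun a ha => hle ha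

section WithRho

variable (ρ : chi K g →ₗ⁅K⁆ g × g × g)
variable (hρι : ∀ x : g, ρ (chiι K g x) = (x, x, 0))
variable (hρψ : ∀ x : g, ρ (chiψ K g x) = (0, x, x))

include hρι hρψ

theorem chi_mem_L (z : chi K g) : z - chiι K g ((ρ z).2.1) ∈ chiL K g := by
  refine chi_induction K g
    (P := fun z => z - chiι K g ((ρ z).2.1) ∈ chiL K g) ?_ ?_ ?_ ?_ ?_ ?_ z
  · intro x
    beta_reduce
    rw [hρι x]
    show chiι K g x - chiι K g x ∈ chiL K g
    rw [sub_self]; exact (chiL K g).zero_mem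
  · intro x
    beta_reduce
    rw [hρψ x]
    show chiψ K g x - chiι K g x ∈ chiL K g
    have h : chiψ K g x - chiι K g x = -(chiι K g x - chiψ K g x) := by abel
    rw [h]
    exact neg_mem (LieSubmodule.subset_lieSpan ⟨x, rfl⟩)
  · beta_reduce
    rw [map_zero]
    show (0 : chi K g) - chiι K g 0 ∈ chiL K g
    rw [chiι_zero, sub_self]; exact (chiL K g).zero_mem
  · intro a b ha hb
    beta_reduce
    rw [map_add]
    show a + b - chiι K g ((ρ a).2.1 + (ρ b).2.1) ∈ chiL K g
    rw [chiι_add]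
    have h : a + b - (chiι K g ((ρ a).2.1) + chiι K g ((ρ b).2.1)) =
        (a - chiι K g ((ρ a).2.1)) + (b - chiι K g ((ρ b).2.1)) := by abel
    rw [h]
    exact add_mem ha hb
  · intro c a ha
    beta_reduce
    rw [map_smul]
    show c • a - chiι K g (c • (ρ a).2.1) ∈ chiL K g
    rw [chiι_smul, ← smul_sub]
    exact (chiL K g).smul_mem c ha
  · intro a b ha hb
    beta_reduce
    rw [LieHom.map_lie]
    show ⁅a, b⁆ - chiι K g ⁅(ρ a).2.1, (ρ b).2.1⁆ ∈ chiL K g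
    rw [chiι_lie]
    have h : ⁅a, b⁆ - ⁅chiι K g ((ρ a).2.1), chiι K g ((ρ b).2.1)⁆ =
        ⁅a - chiι K g ((ρ a).2.1), b⁆ +
          ⁅chiι K g ((ρ a).2.1), b - chiι K g ((ρ b).2.1)⁆ := by
      rw [sub_lie, lie_sub]
      abel
    rw [h, skw (a - chiι K g ((ρ a).2.1)) b]
    exact add_mem (neg_mem ((chiL K g).lie_mem ha)) ((chiL K g).lie_mem hb)

theorem chi_mem_D (z : chi K g) :
    z - chiι K g ((ρ z).1) - chiψ K g ((ρ z).2.2) ∈ chiD K g := by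
  refine chi_induction K g
    (P := fun z => z - chiι K g ((ρ z).1) - chiψ K g ((ρ z).2.2) ∈ chiD K g) ?_ ?_ ?_ ?_ ?_ ?_ z
  · intro x
    beta_reduce
    rw [hρι x]
    show chiι K g x - chiι K g x - chiψ K g 0 ∈ chiD K g
    rw [sub_self, chiψ_zero, zero_sub, neg_zero]; exact (chiD K g).zero_mem
  · intro x
    beta_reduce
    rw [hρψ x]
    show chiψ K g x - chiι K g 0 - chiψ K g x ∈ chiD K g
    rw [chiι_zero, sub_zero, sub_self]; exact (chiD K g).zero_mem
  · beta_reduce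
    rw [map_zero]
    show (0 : chi K g) - chiι K g 0 - chiψ K g 0 ∈ chiD K g
    rw [chiι_zero, chiψ_zero, sub_zero, sub_zero]; exact (chiD K g).zero_mem
  · intro a b ha hb
    beta_reduce
    rw [map_add]
    show a + b - chiι K g ((ρ a).1 + (ρ b).1) - chiψ K g ((ρ a).2.2 + (ρ b).2.2) ∈ chiD K g
    rw [chiι_add, chiψ_add]
    have h : a + b - (chiι K g ((ρ a).1) + chiι K g ((ρ b).1)) -
        (chiψ K g ((ρ a).2.2) + chiψ K g ((ρ b).2.2)) =
        (a - chiι K g ((ρ a).1) - chiψ K g ((ρ a).2.2)) +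
          (b - chiι K g ((ρ b).1) - chiψ K g ((ρ b).2.2)) := by abel
    rw [h]
    exact add_mem ha hb
  · intro c a ha
    beta_reduce
    rw [map_smul]
    show c • a - chiι K g (c • (ρ a).1) - chiψ K g (c • (ρ a).2.2) ∈ chiD K g
    rw [chiι_smul, chiψ_smul]
    have h : c • a - c • chiι K g ((ρ a).1) - c • chiψ K g ((ρ a).2.2) =
        c • (a - chiι K g ((ρ a).1) - chiψ K g ((ρ a).2.2)) := by
      rw [smul_sub, smul_sub]
    rw [h]
    exact (chiD K g).smul_mem c ha
  · intro a b ha hb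
    beta_reduce
    rw [LieHom.map_lie]
    show ⁅a, b⁆ - chiι K g ⁅(ρ a).1, (ρ b).1⁆ - chiψ K g ⁅(ρ a).2.2, (ρ b).2.2⁆ ∈ chiD K g
    rw [chiι_lie, chiψ_lie]
    set ia := chiι K g ((ρ a).1)
    set ib := chiι K g ((ρ b).1)
    set pa := chiψ K g ((ρ a).2.2)
    set pb := chiψ K g ((ρ b).2.2)
    have h : ⁅a, b⁆ - ⁅ia, ib⁆ - ⁅pa, pb⁆ =
        ⁅a - ia - pa, b⁆ + ⁅ia + pa, b - ib - pb⁆ + (⁅ia, pb⁆ + ⁅pa, ib⁆) := by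
      simp only [sub_lie, lie_sub, add_lie, lie_add]
      abel
    rw [h]
    refine add_mem (add_mem ?_ ?_) (add_mem ?_ ?_)
    · have h1 : ⁅a - ia - pa, b⁆ = -⁅b, a - ia - pa⁆ := skw _ _
      rw [h1]
      exact neg_mem ((chiD K g).lie_mem ha)
    · exact (chiD K g).lie_mem hb
    · exact LieSubmodule.subset_lieSpan ⟨(ρ a).1, (ρ b).2.2, rfl⟩
    · have h1 : ⁅pa, ib⁆ = -⁅ib, pa⁆ := skw _ _
      rw [h1]
      exact neg_mem (LieSubmodule.subset_lieSpan ⟨(ρ b).1, (ρ a).2.2, rfl⟩)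

theorem chi_L_comp : ∀ w ∈ chiL K g, (ρ w).2.1 = 0 := by
  let N : LieSubmodule K (chi K g) (chi K g) :=
    { carrier := {z | (ρ z).2.1 = 0}
      add_mem' := fun {a b} ha hb => by
        show (ρ (a + b)).2.1 = 0
        rw [map_add]
        show (ρ a).2.1 + (ρ b).2.1 = 0
        rw [ha, hb, add_zero]
      zero_mem' := by show (ρ 0).2.1 = 0; rw [map_zero]; rfl
      smul_mem' := fun c a ha => by
        show (ρ (c • a)).2.1 = 0
        rw [map_smul]
        show c • (ρ a).2.1 = 0
        rw [ha, smul_zero]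
      lie_mem := fun {z d} hd => by
        show (ρ ⁅z, d⁆).2.1 = 0
        rw [LieHom.map_lie]
        show ⁅(ρ z).2.1, (ρ d).2.1⁆ = 0
        rw [hd, lie_zero] }
  have hle : chiL K g ≤ N := by
    rw [chiL, LieSubmodule.lieSpan_le]
    rintro w ⟨x, rfl⟩
    show (ρ (chiι K g x - chiψ K g x)).2.1 = 0
    rw [map_sub, hρι, hρψ]
    show (x : g) - x = 0
    rw [sub_self]
  exact fun w hw => hle hw

theorem chi_D_comp : ∀ w ∈ chiD K g, (ρ w).1 = 0 ∧ (ρ w).2.2 = 0 := by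
  let N : LieSubmodule K (chi K g) (chi K g) :=
    { carrier := {z | (ρ z).1 = 0 ∧ (ρ z).2.2 = 0}
      add_mem' := fun {a b} ha hb => by
        constructor
        · show (ρ (a + b)).1 = 0
          rw [map_add]
          show (ρ a).1 + (ρ b).1 = 0
          rw [ha.1, hb.1, add_zero]
        · show (ρ (a + b)).2.2 = 0
          rw [map_add]
          show (ρ a).2.2 + (ρ b).2.2 = 0
          rw [ha.2, hb.2, add_zero]
      zero_mem' := by
        constructor
        · show (ρ 0).1 = 0; rw [map_zero]; rfl
        · show (ρ 0).2.2 = 0; rw [map_zero]; rfl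
      smul_mem' := fun c a ha => by
        constructor
        · show (ρ (c • a)).1 = 0
          rw [map_smul]
          show c • (ρ a).1 = 0
          rw [ha.1, smul_zero]
        · show (ρ (c • a)).2.2 = 0
          rw [map_smul]
          show c • (ρ a).2.2 = 0
          rw [ha.2, smul_zero]
      lie_mem := fun {z d} hd => by
        constructor
        · show (ρ ⁅z, d⁆).1 = 0
          rw [LieHom.map_lie]
          show ⁅(ρ z).1, (ρ d).1⁆ = 0
          rw [hd.1, lie_zero]
        · show (ρ ⁅z, d⁆).2.2 = 0
          rw [LieHom.map_lie]
          show ⁅(ρ z).2.2, (ρ d).2.2⁆ = 0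
          rw [hd.2, lie_zero] }
  have hle : chiD K g ≤ N := by
    rw [chiD, LieSubmodule.lieSpan_le]
    rintro w ⟨a, b, rfl⟩
    constructor
    · show (ρ ⁅chiι K g a, chiψ K g b⁆).1 = 0
      rw [LieHom.map_lie, hρι, hρψ]
      show ⁅(a : g), (0 : g)⁆ = 0
      rw [lie_zero]
    · show (ρ ⁅chiι K g a, chiψ K g b⁆).2.2 = 0
      rw [LieHom.map_lie, hρι, hρψ]
      show ⁅(0 : g), (b : g)⁆ = 0
      rw [zero_lie]
  exact fun w hw => hle hw

end WithRho

end Main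

/-- Let `ρ : χ(g) → g ⊕ g ⊕ g` be the homomorphism with `ρ(x) = (x, x, 0)`
and `ρ(xᵠ) = (0, x, x)`, and let `W(g) = ker ρ`. Then `W(g) = L(g) ⊓ D(g)`, `W(g)` is
central in `L(g) + D(g)`, and in particular `W(g)` is an abelian ideal of `χ(g)`. -/
theorem chi_W_eq_inf_and_central
    (K : Type u) [Field K] (hchar : ringChar K ≠ 2)
    (g : Type v) [LieRing g] [LieAlgebra K g]
    (ρ : chi K g →ₗ⁅K⁆ g × g × g)
    (hρι : ∀ x : g, ρ (chiι K g x) = (x, x, 0))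
    (hρψ : ∀ x : g, ρ (chiψ K g x) = (0, x, x)) :
    ρ.ker = chiL K g ⊓ chiD K g ∧
      (∀ w ∈ ρ.ker, ∀ z ∈ chiL K g ⊔ chiD K g, ⁅w, z⁆ = 0) ∧
      (∀ w ∈ ρ.ker, ∀ w' ∈ ρ.ker, ⁅w, w'⁆ = 0) := by
  have hLD := chiLD (K := K) (g := g) hchar
  have hker_eq : ρ.ker = chiL K g ⊓ chiD K g := by
    ext w
    rw [LieHom.mem_ker, LieSubmodule.mem_inf]
    constructor
    · intro hw
      constructor
      · have h := chi_mem_L ρ hρι hρψ w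
        rw [hw] at h
        simpa [chiι_zero] using h
      · have h := chi_mem_D ρ hρι hρψ w
        rw [hw] at h
        simpa [chiι_zero, chiψ_zero] using h
    · rintro ⟨hL, hD⟩
      have h1 := (chi_D_comp ρ hρι hρψ w hD).1
      have h2 := chi_L_comp ρ hρι hρψ w hL
      have h3 := (chi_D_comp ρ hρι hρψ w hD).2
      have hsplit : ρ w = ((ρ w).1, (ρ w).2.1, (ρ w).2.2) := rfl
      rw [hsplit, h1, h2, h3]
      rfl
  refine ⟨hker_eq, ?_, ?_⟩
  · intro w hw z hz
    have hwLD : w ∈ chiL K g ⊓ chiD K g := hker_eq ▸ hw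
    rw [LieSubmodule.mem_inf] at hwLD
    rw [LieSubmodule.mem_sup] at hz
    obtain ⟨a, ha, b, hb, rfl⟩ := hz
    rw [lie_add]
    have h1 : ⁅w, a⁆ = 0 := by
      rw [skw w a, hLD a ha w hwLD.2, neg_zero]
    have h2 : ⁅w, b⁆ = 0 := hLD w hwLD.1 b hb
    rw [h1, h2, add_zero]
  · intro w hw w' hw'
    have hwLD : w ∈ chiL K g ⊓ chiD K g := hker_eq ▸ hw
    have hw'LD : w' ∈ chiL K g ⊓ chiD K g := hker_eq ▸ hw'
    rw [LieSubmodule.mem_inf] at hwLD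
    rw [LieSubmodule.mem_inf] at hw'LD
    exact hLD w hwLD.1 w' hw'LD.2
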